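/- Let r ≥ 1 and let T_r be the triangular array with entries T_r(i,j) = r + 2 − i − j for i ∈ [r], j ∈ [r+1−i]. Suppose nonnegative integers a_1,...,a_r (row operation counts) and b_1,...,b_r (column operation counts) are given, let N = ∑a_i + ∑b_j, and let M be the number of pairs (i,j) with i ∈ [r], j ∈ [r+1−i] such that a_i + b_j ≥ r + 2 − i − j. Then M − N ≤ binom(r+1,2) − N_r = ⌊r²/4⌋, where N_r = binom(⌈r/2⌉+1, 2) + binom(⌊r/2⌋+1, 2). -/

import Mathlib

open Finset

/-- `F` is a configuration in the simple matrix `A` (columns of `A` form a finset):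
there is an injection of rows such that the multiset `F` of columns is a sub-multiset
of the restricted columns of `A`. -/
def ConfigIn {s k m : ℕ} (F : Multiset (Fin k → Fin s)) (A : Finset (Fin m → Fin s)) : Prop :=
  ∃ ρ : Fin k ↪ Fin m, F ≤ A.1.map (fun col => col ∘ ρ)

/-- The forbidden number: the maximum number of columns of an `m`-rowed simple
`s`-matrix avoiding `F` as a configuration. -/
noncomputable def forb (m s : ℕ) {k : ℕ} (F : Multiset (Fin k → Fin s)) : ℕ :=
  sSup {n : ℕ | ∃ A : Finset (Fin m → Fin s), ¬ ConfigIn F A ∧ A.card = n}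

/-- The 2-rowed configuration with `a` columns (0,0), `b` columns (1,0),
`c` columns (0,1) and `d` columns (1,1), viewed as a 3-matrix. -/
def Fabcd (a b c d : ℕ) : Multiset (Fin 2 → Fin 3) :=
  Multiset.replicate a ![0, 0] + Multiset.replicate b ![1, 0] +
  Multiset.replicate c ![0, 1] + Multiset.replicate d ![1, 1]

/-- `p` copies of `K₂`. -/
def pK2 (p : ℕ) : Multiset (Fin 2 → Fin 3) := Fabcd p p p p

/-- `p` copies of `I₂`. -/
def pI2 (p : ℕ) : Multiset (Fin 2 → Fin 3) := Fabcd 0 p p 0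

/-- Mantel-style bound: a triangle-free set of ordered edges on `[1,r]` has
at most `r^2/4` elements. -/
lemma mantel_pairs (r : ℕ) (E : Finset (ℕ × ℕ))
    (h1 : ∀ e ∈ E, 1 ≤ e.1 ∧ e.1 < e.2 ∧ e.2 ≤ r)
    (h2 : ∀ u v w, (u, v) ∈ E → (v, w) ∈ E → (u, w) ∈ E → False) :
    4 * E.card ≤ r ^ 2 := by
  classical
  set V : Finset ℕ := Icc 1 r with hV
  have hVcard : V.card = r := by simp [hV]
  set dl : ℕ → ℕ := fun x => (E.filter fun e => e.1 = x).card with hdl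
  set dh : ℕ → ℕ := fun x => (E.filter fun e => e.2 = x).card with hdh
  set d : ℕ → ℕ := fun x => dl x + dh x with hd
  have hmem1 : ∀ e ∈ E, e.1 ∈ V := by
    intro e he; obtain ⟨h, h', h''⟩ := h1 e he; simp [hV, mem_Icc]; omega
  have hmem2 : ∀ e ∈ E, e.2 ∈ V := by
    intro e he; obtain ⟨h, h', h''⟩ := h1 e he; simp [hV, mem_Icc]; omega
  -- neighborhoods
  set N : ℕ → Finset ℕ := fun u =>
    ((E.filter fun e => e.1 = u).image Prod.snd) ∪
    ((E.filter fun e => e.2 = u).image Prod.fst) with hN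
  have hmemN : ∀ u x, x ∈ N u ↔ ((u, x) ∈ E ∨ (x, u) ∈ E) := by
    intro u x
    simp only [hN, mem_union, mem_image, mem_filter]
    constructor
    · rintro (⟨e, ⟨he, h1e⟩, h2e⟩ | ⟨e, ⟨he, h2e⟩, h1e⟩)
      · left; have : e = (u, x) := by ext <;> simp [h1e, h2e]
        rwa [← this]
      · right; have : e = (x, u) := by ext <;> simp [h1e, h2e]
        rwa [← this]
    · rintro (h | h)
      · exact Or.inl ⟨(u, x), ⟨h, rfl⟩, rfl⟩
      · exact Or.inr ⟨(x, u), ⟨h, rfl⟩, rfl⟩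
  have hcardN : ∀ u, (N u).card = d u := by
    intro u
    rw [hN]
    rw [card_union_of_disjoint, card_image_of_injOn, card_image_of_injOn]
    · intro e he e' he' hee
      simp only [coe_filter, Set.mem_setOf_eq] at he he'
      ext
      · exact hee
      · rw [he.2, he'.2]
    · intro e he e' he' hee
      simp only [coe_filter, Set.mem_setOf_eq] at he he'
      ext
      · rw [he.2, he'.2]
      · exact hee
    · rw [disjoint_left]
      rintro x hx hx'
      simp only [mem_image, mem_filter] at hx hx'
      obtain ⟨e, ⟨he, h1e⟩, h2e⟩ := hx
      obtain ⟨e', ⟨he', h2e'⟩, h1e'⟩ := hx'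
      have hex : e = (u, x) := by ext <;> simp [h1e, h2e]
      have hex' : e' = (x, u) := by ext <;> simp [h1e', h2e']
      subst hex; subst hex'
      have := (h1 _ he).2.1
      have := (h1 _ he').2.1
      simp at this
      omega
  have hNsub : ∀ u, N u ⊆ V := by
    intro u x hx
    rw [hmemN] at hx
    rcases hx with h | h
    · exact hmem2 _ h
    · exact hmem1 _ h
  -- the degree bound for each edge
  have hdeg : ∀ e ∈ E, d e.1 + d e.2 ≤ r := by
    rintro ⟨u, w⟩ he
    have hdisj : Disjoint (N u) (N w) := by
      rw [disjoint_left]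
      intro x hxu hxw
      rw [hmemN] at hxu hxw
      have huw := (h1 _ he).2.1
      simp only at huw ⊢
      rcases hxu with h | h <;> rcases hxw with h' | h'
      · exact h2 u w x he h' h
      · exact h2 u x w h h' he
      · -- (x,u) ∈ E and (w,x) ∈ E : x < u, w < x contradict u < w
        have ha := (h1 _ h).2.1
        have hb := (h1 _ h').2.1
        simp only at ha hb
        omega
      · exact h2 x u w h he h'
    calc d u + d w = (N u).card + (N w).card := by rw [hcardN, hcardN]
      _ = (N u ∪ N w).card := (card_union_of_disjoint hdisj).symm
      _ ≤ V.card := card_le_card (union_subset (hNsub u) (hNsub w))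
      _ = r := hVcard
  -- handshake
  have hsl : ∑ x ∈ V, dl x = E.card := by
    rw [hdl]
    exact (card_eq_sum_card_fiberwise hmem1).symm
  have hsh : ∑ x ∈ V, dh x = E.card := by
    exact (card_eq_sum_card_fiberwise hmem2).symm
  have hhand : ∑ x ∈ V, d x = 2 * E.card := by
    simp only [hd, sum_add_distrib, hsl, hsh]; ring
  -- incidence sums
  have hfib1 : ∑ e ∈ E, d e.1 = ∑ x ∈ V, dl x * d x := by
    rw [← sum_fiberwise_of_maps_to hmem1 (fun e => d e.1)]
    apply sum_congr rfl
    intro x _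
    rw [hdl, ← smul_eq_mul, ← sum_const]
    apply sum_congr rfl
    intro e he
    rw [(mem_filter.mp he).2]
  have hfib2 : ∑ e ∈ E, d e.2 = ∑ x ∈ V, dh x * d x := by
    rw [← sum_fiberwise_of_maps_to hmem2 (fun e => d e.2)]
    apply sum_congr rfl
    intro x _
    rw [hdh, ← smul_eq_mul, ← sum_const]
    apply sum_congr rfl
    intro e he
    rw [(mem_filter.mp he).2]
  have hsq : ∑ x ∈ V, d x * d x ≤ r * E.card := by
    have : ∑ x ∈ V, d x * d x = ∑ e ∈ E, (d e.1 + d e.2) := by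
      rw [sum_add_distrib, hfib1, hfib2, ← sum_add_distrib]
      apply sum_congr rfl
      intro x _
      rw [hd]; ring
    rw [this]
    calc ∑ e ∈ E, (d e.1 + d e.2) ≤ ∑ _e ∈ E, r := sum_le_sum hdeg
      _ = E.card * r := by rw [sum_const, smul_eq_mul]
      _ = r * E.card := mul_comm _ _
  -- Cauchy-Schwarz
  have hcs : ((∑ x ∈ V, (d x : ℤ)) ^ 2) ≤ (V.card : ℤ) * ∑ x ∈ V, (d x : ℤ) ^ 2 :=
    sq_sum_le_card_mul_sum_sq
  have h1' : ((2 * E.card : ℕ) : ℤ) ^ 2 ≤ (r : ℤ) * ((r * E.card : ℕ) : ℤ) := by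
    calc ((2 * E.card : ℕ) : ℤ) ^ 2 = (∑ x ∈ V, (d x : ℤ)) ^ 2 := by
          rw [← Nat.cast_sum, hhand]
      _ ≤ (V.card : ℤ) * ∑ x ∈ V, (d x : ℤ) ^ 2 := hcs
      _ = (r : ℤ) * ((∑ x ∈ V, d x * d x : ℕ) : ℤ) := by
          rw [hVcard, Nat.cast_sum]
          congr 1
          apply sum_congr rfl
          intro x _
          rw [Nat.cast_mul]
          ring
      _ ≤ (r : ℤ) * ((r * E.card : ℕ) : ℤ) := by
          apply mul_le_mul_of_nonneg_left _ (by positivity)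
          exact_mod_cast hsq
  push_cast at h1'
  rcases Nat.eq_zero_or_pos E.card with h0 | hpos
  · rw [h0]; positivity
  · have hE : (1 : ℤ) ≤ (E.card : ℤ) := by exact_mod_cast hpos
    nlinarith [h1', hE]

/-- The remainder set injects into a triangle-free edge set: bound `r^2/4`. -/
lemma Sset_bound (r : ℕ) (a b : ℕ → ℕ) :
    (((Finset.Icc 1 r) ×ˢ (Finset.Icc 1 r)).filter (fun ij =>
        ij.1 + ij.2 ≤ r + 1 ∧ r + 2 ≤ a ij.1 + b ij.2 + ij.1 + ij.2 ∧
        a ij.1 + ij.1 + ij.2 ≤ r + 1 ∧ b ij.2 + ij.1 + ij.2 ≤ r + 1)).card ≤ r ^ 2 / 4 := by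
  classical
  set S := (((Finset.Icc 1 r) ×ˢ (Finset.Icc 1 r)).filter (fun ij =>
        ij.1 + ij.2 ≤ r + 1 ∧ r + 2 ≤ a ij.1 + b ij.2 + ij.1 + ij.2 ∧
        a ij.1 + ij.1 + ij.2 ≤ r + 1 ∧ b ij.2 + ij.1 + ij.2 ≤ r + 1)) with hS
  have hSmem : ∀ p ∈ S, 1 ≤ p.1 ∧ p.1 ≤ r ∧ 1 ≤ p.2 ∧ p.2 ≤ r ∧
      r + 2 ≤ a p.1 + b p.2 + p.1 + p.2 ∧
      a p.1 + p.1 + p.2 ≤ r + 1 ∧ b p.2 + p.1 + p.2 ≤ r + 1 := by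
    intro p hp
    rw [hS, mem_filter, mem_product, mem_Icc, mem_Icc] at hp
    exact ⟨hp.1.1.1, hp.1.1.2, hp.1.2.1, hp.1.2.2, hp.2.2.1, hp.2.2.2⟩
  set E := S.image (fun p => (p.1, r + 1 - p.2)) with hEdef
  have hcard : E.card = S.card := by
    apply card_image_of_injOn
    intro p hp q hq hpq
    have h1 := hSmem p hp
    have h2 := hSmem q hq
    rw [Prod.mk.injEq] at hpq
    ext
    · exact hpq.1
    · omega
  have hE : ∀ u v, (u, v) ∈ E → 1 ≤ u ∧ u < v ∧ v ≤ r ∧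
      a u + u + (r + 1 - v) ≤ r + 1 ∧ b (r + 1 - v) + u + (r + 1 - v) ≤ r + 1 ∧
      r + 2 ≤ a u + b (r + 1 - v) + u + (r + 1 - v) := by
    intro u v huv
    rw [hEdef, mem_image] at huv
    obtain ⟨p, hp, hpq⟩ := huv
    have hf := hSmem p hp
    rw [Prod.mk.injEq] at hpq
    obtain ⟨h1, h2⟩ := hpq
    subst h1
    have hv : r + 1 - v = p.2 := by omega
    rw [hv]
    omega
  have hmantel : 4 * E.card ≤ r ^ 2 := by
    apply mantel_pairs r E
    · rintro ⟨u, v⟩ he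
      have := hE u v he
      exact ⟨this.1, this.2.1, this.2.2.1⟩
    · intro u v w huv hvw huw
      have h1 := hE u v huv
      have h2 := hE v w hvw
      have h3 := hE u w huw
      omega
  rw [← hcard, Nat.le_div_iff_mul_le (by norm_num)]
  omega

/-- The main counting inequality, in `ℕ`. -/
lemma M_le_N_add (r : ℕ) (a b : ℕ → ℕ) :
    (((Finset.Icc 1 r) ×ˢ (Finset.Icc 1 r)).filter (fun ij =>
        ij.1 + ij.2 ≤ r + 1 ∧ r + 2 ≤ a ij.1 + b ij.2 + ij.1 + ij.2)).card
      ≤ (∑ i ∈ Finset.Icc 1 r, a i + ∑ j ∈ Finset.Icc 1 r, b j) + r ^ 2 / 4 := by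
  classical
  set D := (((Finset.Icc 1 r) ×ˢ (Finset.Icc 1 r)).filter (fun ij =>
        ij.1 + ij.2 ≤ r + 1 ∧ r + 2 ≤ a ij.1 + b ij.2 + ij.1 + ij.2)) with hD
  have hDmem : ∀ p ∈ D, 1 ≤ p.1 ∧ p.1 ≤ r ∧ 1 ≤ p.2 ∧ p.2 ≤ r ∧
      p.1 + p.2 ≤ r + 1 ∧ r + 2 ≤ a p.1 + b p.2 + p.1 + p.2 := by
    intro p hp
    rw [hD, mem_filter, mem_product, mem_Icc, mem_Icc] at hp
    exact ⟨hp.1.1.1, hp.1.1.2, hp.1.2.1, hp.1.2.2, hp.2.1, hp.2.2⟩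
  set P : ℕ × ℕ → Prop := fun ij => r + 2 ≤ a ij.1 + ij.1 + ij.2 with hP
  set Q : ℕ × ℕ → Prop := fun ij => r + 2 ≤ b ij.2 + ij.1 + ij.2 with hQ
  have hsplit : D.card = (D.filter P).card + ((D.filter (fun p => ¬ P p)).filter Q).card
      + ((D.filter (fun p => ¬ P p)).filter (fun p => ¬ Q p)).card := by
    rw [add_assoc, card_filter_add_card_filter_not (p := Q),
      card_filter_add_card_filter_not (p := P)]
  -- row-automatic cells
  have hrow : (D.filter P).card ≤ ∑ i ∈ Finset.Icc 1 r, a i := by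
    rw [card_eq_sum_card_fiberwise (f := Prod.fst) (t := Finset.Icc 1 r)
      (fun p hp => by
        have := hDmem p (mem_of_mem_filter p hp); rw [mem_coe, mem_Icc]; exact ⟨this.1, this.2.1⟩)]
    apply sum_le_sum
    intro i _
    have : ((D.filter P).filter fun p => p.1 = i).card ≤ (Finset.range (a i)).card := by
      apply card_le_card_of_injOn (fun p => a p.1 + p.1 + p.2 - (r + 2))
      · intro p hp
        rw [mem_coe, mem_filter, mem_filter] at hp
        obtain ⟨⟨hpD, hpP⟩, hpi⟩ := hp
        have hd := hDmem p hpD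
        rw [hP] at hpP
        rw [mem_coe, mem_range, ← hpi]
        beta_reduce
        omega
      · intro p hp q hq hpq
        rw [mem_coe, mem_filter, mem_filter] at hp hq
        obtain ⟨⟨hpD, hpP⟩, hpi⟩ := hp
        obtain ⟨⟨hqD, hqP⟩, hqi⟩ := hq
        rw [hP] at hpP hqP
        simp only at hpq
        rw [hpi] at hpP hpq
        rw [hqi] at hqP hpq
        ext
        · rw [hpi, hqi]
        · omega
    rwa [card_range] at this
  -- column-automatic cells
  have hcol : ((D.filter (fun p => ¬ P p)).filter Q).card ≤ ∑ j ∈ Finset.Icc 1 r, b j := by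
    rw [card_eq_sum_card_fiberwise (f := Prod.snd) (t := Finset.Icc 1 r)
      (fun p hp => by
        have := hDmem p (mem_of_mem_filter p (mem_of_mem_filter p hp))
        rw [mem_coe, mem_Icc]; exact ⟨this.2.2.1, this.2.2.2.1⟩)]
    apply sum_le_sum
    intro j _
    have : (((D.filter (fun p => ¬ P p)).filter Q).filter fun p => p.2 = j).card
        ≤ (Finset.range (b j)).card := by
      apply card_le_card_of_injOn (fun p => b p.2 + p.1 + p.2 - (r + 2))
      · intro p hp
        rw [mem_coe, mem_filter, mem_filter, mem_filter] at hp
        obtain ⟨⟨⟨hpD, hpP⟩, hpQ⟩, hpj⟩ := hp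
        have hd := hDmem p hpD
        rw [hQ] at hpQ
        rw [mem_coe, mem_range, ← hpj]
        beta_reduce
        omega
      · intro p hp q hq hpq
        rw [mem_coe, mem_filter, mem_filter, mem_filter] at hp hq
        obtain ⟨⟨⟨hpD, _⟩, hpQ⟩, hpj⟩ := hp
        obtain ⟨⟨⟨hqD, _⟩, hqQ⟩, hqj⟩ := hq
        rw [hQ] at hpQ hqQ
        simp only at hpq
        rw [hpj] at hpQ hpq
        rw [hqj] at hqQ hpq
        ext
        · omega
        · rw [hpj, hqj]
    rwa [card_range] at this
  -- remainder
  have hrem : ((D.filter (fun p => ¬ P p)).filter (fun p => ¬ Q p)).card ≤ r ^ 2 / 4 := by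
    refine le_trans (card_le_card ?_) (Sset_bound r a b)
    intro p hp
    rw [mem_filter, mem_filter] at hp
    obtain ⟨⟨hpD, hpP⟩, hpQ⟩ := hp
    have hd := hDmem p hpD
    rw [hP] at hpP
    rw [hQ] at hpQ
    rw [mem_filter, mem_product, mem_Icc, mem_Icc]
    refine ⟨⟨⟨hd.1, hd.2.1⟩, hd.2.2.1, hd.2.2.2.1⟩, hd.2.2.2.2.1, hd.2.2.2.2.2, by omega, by omega⟩
  omega

theorem M_minus_N (r : ℕ) (hr : 1 ≤ r) (a b : ℕ → ℕ) :
    (((((Finset.Icc 1 r) ×ˢ (Finset.Icc 1 r)).filter (fun ij =>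
          ij.1 + ij.2 ≤ r + 1 ∧ r + 2 ≤ a ij.1 + b ij.2 + ij.1 + ij.2)).card : ℤ)
        - ((∑ i ∈ Finset.Icc 1 r, a i + ∑ j ∈ Finset.Icc 1 r, b j : ℕ) : ℤ))
      ≤ ((r ^ 2 / 4 : ℕ) : ℤ) := by
  have h := M_le_N_add r a b
  have h' := (Nat.cast_le (α := ℤ)).mpr h
  push_cast at h' ⊢
  linarith
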